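/- arXiv:1706.08327 — 2 statements merged into one kernel-verified Lean document; each statement's English description precedes it below -/
import Mathlib

section
/- Let π be a probability measure on a measurable space Θ, let g: Θ → ℝ^s be a bounded measurable function, and let Δ ∈ ℝ^s. Assume 0 < ∫ exp(−⟨Δ, g(θ)⟩) π(dθ) < ∞ and let π̃ be the probability measure whose density with respect to π is exp(−⟨Δ, g(θ)⟩) / ∫ exp(−⟨Δ, g⟩) dπ. Then KL(π, π̃) ≤ log ∫ exp(‖∫ g dπ − g(θ)‖ · ‖Δ‖) π(dθ). -/
open MeasureTheory
open scoped RealInnerProductSpace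

/-- Kullback–Leibler divergence `KL(μ, ν) = ∫ log (dμ/dν) dμ`. -/
noncomputable def KLdiv {Θ : Type*} [MeasurableSpace Θ] (μ ν : Measure Θ) : ℝ :=
  ∫ θ, Real.log ((μ.rnDeriv ν θ).toReal) ∂μ

theorem stmt1 {Θ : Type*} [MeasurableSpace Θ] (π : Measure Θ) [IsProbabilityMeasure π]
    {s : ℕ} (g : Θ → EuclideanSpace ℝ (Fin s)) (hg_meas : Measurable g)
    (hg_bdd : ∃ C : ℝ, ∀ θ, ‖g θ‖ ≤ C) (Δ : EuclideanSpace ℝ (Fin s))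
    (Z : ℝ) (hZ : Z = ∫ θ, Real.exp (-⟪Δ, g θ⟫) ∂π)
    (hint : Integrable (fun θ => Real.exp (-⟪Δ, g θ⟫)) π)
    (hZpos : 0 < Z)
    (πt : Measure Θ)
    (hπt : πt = π.withDensity fun θ => ENNReal.ofReal (Real.exp (-⟪Δ, g θ⟫) / Z)) :
    KLdiv π πt ≤ Real.log (∫ θ, Real.exp (‖(∫ θ', g θ' ∂π) - g θ‖ * ‖Δ‖) ∂π) := by
  obtain ⟨C, hC⟩ := hg_bdd
  set m := ∫ θ', g θ' ∂π with hm
  -- basic integrability facts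
  have hgint : Integrable g π :=
    ⟨hg_meas.aestronglyMeasurable,
      HasFiniteIntegral.of_bounded (C := C) (Filter.Eventually.of_forall hC)⟩
  have hinner_meas : Measurable fun θ => ⟪Δ, g θ⟫ :=
    Measurable.inner measurable_const hg_meas
  have hinner_bd : ∀ θ, |⟪Δ, g θ⟫| ≤ ‖Δ‖ * C := fun θ => by
    calc |⟪Δ, g θ⟫| ≤ ‖Δ‖ * ‖g θ‖ := abs_real_inner_le_norm Δ (g θ)
      _ ≤ ‖Δ‖ * C := by
        exact mul_le_mul_of_nonneg_left (hC θ) (norm_nonneg Δ)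
  have hinner_int : Integrable (fun θ => ⟪Δ, g θ⟫) π :=
    ⟨hinner_meas.aestronglyMeasurable,
      HasFiniteIntegral.of_bounded (C := ‖Δ‖ * C)
        (Filter.Eventually.of_forall fun θ => by
          simpa [Real.norm_eq_abs] using hinner_bd θ)⟩
  -- compute the Radon-Nikodym derivative
  set f : Θ → ENNReal := fun θ => ENNReal.ofReal (Real.exp (-⟪Δ, g θ⟫) / Z) with hf
  have hf_meas : Measurable f := by
    apply ENNReal.measurable_ofReal.comp
    exact (hinner_meas.neg.exp.div_const Z)
  have hf_pos : ∀ θ, 0 < Real.exp (-⟪Δ, g θ⟫) / Z :=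
    fun θ => div_pos (Real.exp_pos _) hZpos
  have h_rn : π.rnDeriv πt =ᵐ[π] fun θ => (f θ)⁻¹ := by
    rw [hπt]
    have h1 := Measure.rnDeriv_withDensity_right (μ := π) (ν := π)
      hf_meas.aemeasurable
      (Filter.Eventually.of_forall fun θ => by
        simp only [hf, ne_eq, ENNReal.ofReal_eq_zero, not_le]
        exact hf_pos θ)
      (Filter.Eventually.of_forall fun θ => ENNReal.ofReal_ne_top)
    filter_upwards [h1, Measure.rnDeriv_self π] with θ h1θ h2θ
    rw [h1θ, h2θ, mul_one]
  -- value of the log of the derivative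
  have h_log : ∀ᵐ θ ∂π,
      Real.log ((π.rnDeriv πt θ).toReal) = Real.log Z + ⟪Δ, g θ⟫ := by
    filter_upwards [h_rn] with θ hθ
    rw [hθ, ENNReal.toReal_inv, ENNReal.toReal_ofReal (hf_pos θ).le, Real.log_inv,
      Real.log_div (Real.exp_ne_zero _) hZpos.ne', Real.log_exp]
    ring
  have hKL : KLdiv π πt = Real.log Z + ⟪Δ, m⟫ := by
    rw [KLdiv, integral_congr_ae h_log, integral_add (integrable_const _) hinner_int,
      integral_const, Measure.real, measure_univ, ENNReal.toReal_one, smul_eq_mul, one_mul,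
      integral_inner hgint]
  -- rewrite Z * exp ⟪Δ, m⟫ as an integral
  have hZexp : Z * Real.exp ⟪Δ, m⟫ = ∫ θ, Real.exp (⟪Δ, m - g θ⟫) ∂π := by
    have : ∀ θ, Real.exp (⟪Δ, m - g θ⟫)
        = Real.exp (-⟪Δ, g θ⟫) * Real.exp ⟪Δ, m⟫ := fun θ => by
      rw [inner_sub_right, ← Real.exp_add]; ring_nf
    simp_rw [this]
    rw [integral_mul_const, ← hZ]
  -- pointwise bound and integrability of the dominating function
  have hptwise : ∀ θ, Real.exp (⟪Δ, m - g θ⟫) ≤ Real.exp (‖m - g θ‖ * ‖Δ‖) :=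
    fun θ => Real.exp_le_exp.mpr <| by
      calc ⟪Δ, m - g θ⟫ ≤ ‖Δ‖ * ‖m - g θ‖ := real_inner_le_norm Δ (m - g θ)
        _ = ‖m - g θ‖ * ‖Δ‖ := mul_comm _ _
  have hbd : ∀ θ, ‖m - g θ‖ * ‖Δ‖ ≤ (‖m‖ + C) * ‖Δ‖ := fun θ =>
    mul_le_mul_of_nonneg_right
      ((norm_sub_le _ _).trans (by linarith [hC θ])) (norm_nonneg Δ)
  have hmeas1 : Measurable fun θ => Real.exp (‖m - g θ‖ * ‖Δ‖) :=
    ((((measurable_const.sub hg_meas).norm).mul_const ‖Δ‖).exp)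
  have hint1 : Integrable (fun θ => Real.exp (‖m - g θ‖ * ‖Δ‖)) π :=
    ⟨hmeas1.aestronglyMeasurable,
      HasFiniteIntegral.of_bounded (C := Real.exp ((‖m‖ + C) * ‖Δ‖))
        (Filter.Eventually.of_forall fun θ => by
          rw [Real.norm_eq_abs, abs_of_pos (Real.exp_pos _)]
          exact Real.exp_le_exp.mpr (hbd θ))⟩
  have hint2 : Integrable (fun θ => Real.exp (⟪Δ, m - g θ⟫)) π :=
    ⟨((Measurable.inner measurable_const (measurable_const.sub hg_meas)).exp).aestronglyMeasurable,
      HasFiniteIntegral.of_bounded (C := Real.exp ((‖m‖ + C) * ‖Δ‖))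
        (Filter.Eventually.of_forall fun θ => by
          rw [Real.norm_eq_abs, abs_of_pos (Real.exp_pos _)]
          exact (hptwise θ).trans (Real.exp_le_exp.mpr (hbd θ)))⟩
  -- conclude
  rw [hKL]
  have hpos : 0 < Z * Real.exp ⟪Δ, m⟫ := mul_pos hZpos (Real.exp_pos _)
  calc Real.log Z + ⟪Δ, m⟫ = Real.log (Z * Real.exp ⟪Δ, m⟫) := by
        rw [Real.log_mul hZpos.ne' (Real.exp_ne_zero _), Real.log_exp]
    _ ≤ Real.log (∫ θ, Real.exp (‖m - g θ‖ * ‖Δ‖) ∂π) := by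
        apply Real.log_le_log hpos
        rw [hZexp]
        exact integral_mono hint2 hint1 hptwise
end

section
/- Let (Θ, 𝔅) be a measurable space, Q a Markov kernel on Θ, and α, α̃: Θ × Θ → [0,1] measurable functions. Define K_α(θ, A) = ∫ 1_A(θ') α(θ, θ') Q(θ, dθ') + 1_A(θ)(1 − ∫ α(θ, θ') Q(θ, dθ')) and define K_{α̃} analogously with α̃. Then for every θ ∈ Θ, the total variation distance satisfies ‖K_α(θ, ·) − K_{α̃}(θ, ·)‖ ≤ ∫ |α(θ, θ') − α̃(θ, θ')| Q(θ, dθ'). -/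
open MeasureTheory ProbabilityTheory

/-- Total variation distance between two measures:
`sup` over measurable sets `A` of `|μ A - ν A|`. -/
noncomputable def tvDist {Θ : Type*} [MeasurableSpace Θ] (μ ν : Measure Θ) : ℝ :=
  ⨆ A : {s : Set Θ // MeasurableSet s}, |(μ A.1).toReal - (ν A.1).toReal|

/-- The Metropolis–Hastings-type kernel with proposal kernel `Q` and acceptance
probability `α`: `K_α(θ, A) = ∫_A α(θ,θ') Q(θ,dθ') + 1_A(θ) (1 - ∫ α(θ,θ') Q(θ,dθ'))`. -/
noncomputable def mhKernel {Θ : Type*} [MeasurableSpace Θ]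
    (Q : Kernel Θ Θ) (α : Θ → Θ → ℝ) (θ : Θ) : Measure Θ :=
  (Q θ).withDensity (fun θ' => ENNReal.ofReal (α θ θ')) +
    ENNReal.ofReal (1 - ∫ θ', α θ θ' ∂(Q θ)) • Measure.dirac θ

lemma mh_apply_aux {Θ : Type*} [MeasurableSpace Θ] (μ : Measure Θ) [IsProbabilityMeasure μ]
    (f : Θ → ℝ) (hf : Measurable f) (h01 : ∀ x, f x ∈ Set.Icc (0:ℝ) 1)
    {A : Set Θ} (hA : MeasurableSet A) (θ : Θ) :
    ((μ.withDensity (fun x => ENNReal.ofReal (f x)) +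
        ENNReal.ofReal (1 - ∫ x, f x ∂μ) • Measure.dirac θ) A).toReal =
      ∫ x in A, f x ∂μ +
        (A.indicator (fun _ => (1:ℝ)) θ) * (1 - ∫ x, f x ∂μ) := by
  have hfi : Integrable f μ := by
    refine (integrable_const (1:ℝ)).mono' hf.aestronglyMeasurable ?_
    exact ae_of_all _ fun x => by
      rw [Real.norm_eq_abs, abs_of_nonneg (h01 x).1]; exact (h01 x).2
  have h1 : μ.withDensity (fun x => ENNReal.ofReal (f x)) A
      = ENNReal.ofReal (∫ x in A, f x ∂μ) := by
    rw [withDensity_apply _ hA,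
      ← ofReal_integral_eq_lintegral_ofReal hfi.restrict (ae_of_all _ fun x => (h01 x).1)]
  rw [Measure.add_apply, Measure.smul_apply, Measure.dirac_apply' _ hA, h1]
  have h2 : ENNReal.ofReal (1 - ∫ x, f x ∂μ) * A.indicator 1 θ ≠ ⊤ := by
    refine ENNReal.mul_ne_top ENNReal.ofReal_ne_top ?_
    by_cases h : θ ∈ A <;> simp [Set.indicator_apply, h]
  rw [ENNReal.toReal_add, smul_eq_mul, ENNReal.toReal_mul, ENNReal.toReal_ofReal (setIntegral_nonneg hA fun x _ => (h01 x).1), ENNReal.toReal_ofReal]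
  · congr 1
    by_cases h : θ ∈ A <;> simp [Set.indicator_apply, h]
  · have : ∫ x, f x ∂μ ≤ 1 := by
      calc ∫ x, f x ∂μ ≤ ∫ _x, (1:ℝ) ∂μ := integral_mono hfi (integrable_const 1) fun x => (h01 x).2
      _ = 1 := by simp
    linarith
  · exact ENNReal.ofReal_ne_top
  · exact h2

theorem stmt11 {Θ : Type*} [MeasurableSpace Θ]
    (Q : Kernel Θ Θ) [IsMarkovKernel Q]
    (α α' : Θ → Θ → ℝ)
    (hα_meas : Measurable (Function.uncurry α)) (hα'_meas : Measurable (Function.uncurry α'))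
    (hα01 : ∀ θ θ', α θ θ' ∈ Set.Icc (0 : ℝ) 1)
    (hα'01 : ∀ θ θ', α' θ θ' ∈ Set.Icc (0 : ℝ) 1)
    (θ : Θ) :
    tvDist (mhKernel Q α θ) (mhKernel Q α' θ) ≤ ∫ θ', |α θ θ' - α' θ θ'| ∂(Q θ) := by
  set μ := Q θ
  set f := α θ with hfdef
  set g := α' θ with hgdef
  have hfm : Measurable f := hα_meas.comp (measurable_prodMk_left)
  have hgm : Measurable g := hα'_meas.comp (measurable_prodMk_left)
  have hfi : Integrable f μ := by
    refine (integrable_const (1:ℝ)).mono' hfm.aestronglyMeasurable ?_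
    exact ae_of_all _ fun x => by
      rw [Real.norm_eq_abs, abs_of_nonneg (hα01 θ x).1]; exact (hα01 θ x).2
  have hgi : Integrable g μ := by
    refine (integrable_const (1:ℝ)).mono' hgm.aestronglyMeasurable ?_
    exact ae_of_all _ fun x => by
      rw [Real.norm_eq_abs, abs_of_nonneg (hα'01 θ x).1]; exact (hα'01 θ x).2
  have hsub : Integrable (fun x => f x - g x) μ := hfi.sub hgi
  have habs : Integrable (fun x => |f x - g x|) μ := hsub.abs
  refine ciSup_le fun ⟨A, hA⟩ => ?_
  rw [mhKernel, mhKernel,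
    mh_apply_aux μ f hfm (fun x => hα01 θ x) hA θ,
    mh_apply_aux μ g hgm (fun x => hα'01 θ x) hA θ]
  by_cases h : θ ∈ A
  · have hcompl : ∫ x in A, (f x - g x) ∂μ + ∫ x in Aᶜ, (f x - g x) ∂μ
        = ∫ x, (f x - g x) ∂μ := integral_add_compl hA hsub
    have hAeq : ∫ x in A, f x ∂μ - ∫ x in A, g x ∂μ = ∫ x in A, (f x - g x) ∂μ :=
      (integral_sub hfi.restrict hgi.restrict).symm
    have hall : ∫ x, f x ∂μ - ∫ x, g x ∂μ = ∫ x, (f x - g x) ∂μ :=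
      (integral_sub hfi hgi).symm
    simp only [Set.indicator_of_mem h, one_mul]
    have : |∫ x in A, f x ∂μ + (1 - ∫ x, f x ∂μ) -
        (∫ x in A, g x ∂μ + (1 - ∫ x, g x ∂μ))| = |∫ x in Aᶜ, (f x - g x) ∂μ| := by
      rw [abs_sub_comm]
      congr 1
      linarith [hcompl, hAeq, hall]
    rw [this]
    calc |∫ x in Aᶜ, (f x - g x) ∂μ| ≤ ∫ x in Aᶜ, |f x - g x| ∂μ := by
          simpa [Real.norm_eq_abs] using
            norm_integral_le_integral_norm (μ := μ.restrict Aᶜ) fun x => f x - g x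
      _ ≤ ∫ x, |f x - g x| ∂μ :=
          setIntegral_le_integral habs (ae_of_all _ fun x => abs_nonneg _)
  · simp only [Set.indicator_of_notMem h, zero_mul, add_zero]
    have hAeq : ∫ x in A, f x ∂μ - ∫ x in A, g x ∂μ = ∫ x in A, (f x - g x) ∂μ :=
      (integral_sub hfi.restrict hgi.restrict).symm
    rw [hAeq]
    calc |∫ x in A, (f x - g x) ∂μ| ≤ ∫ x in A, |f x - g x| ∂μ := by
          simpa [Real.norm_eq_abs] using
            norm_integral_le_integral_norm (μ := μ.restrict A) fun x => f x - g x
      _ ≤ ∫ x, |f x - g x| ∂μ :=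
          setIntegral_le_integral habs (ae_of_all _ fun x => abs_nonneg _)
end
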